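/- Let n > 0 and let ψ : ℝ → ℝ be twice differentiable with ψ'' = −2 sin ψ (the pendulum equation). Then the curve α(t) = (cos ψ(t), −sin ψ(t), 0), β(t) = (sin ψ(t), cos ψ(t), 0), M(t) = (0, 0, ψ'(t)) is a solution of the system dM/dt = M×ω + e₁×α + e₂×β, dα/dt = α×ω, dβ/dt = β×ω with ω = M I⁻¹, I = diag(n,n,1). Along this solution L = n(ω₁γ₁ + ω₂γ₂) + ω₃(γ₃ − 1) ≡ 0 (γ = α×β) and H = (1/2)(n(ω₁² + ω₂²) + ω₃²) − α₁ − β₂ = (1/2)ψ'(t)² − 2 cos ψ(t), which is constant and ≥ −2. -/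

import Mathlib

open Matrix Real

/-- For any solution `ψ` of the pendulum equation `ψ'' = −2 sin ψ`,
the curve `α = (cos ψ, −sin ψ, 0)`, `β = (sin ψ, cos ψ, 0)`, `M = (0, 0, ψ')`
solves the equations of motion; along it `L ≡ 0` and
`H = (1/2)ψ'² − 2 cos ψ`, which is constant and `≥ −2`. -/
theorem pendulum_motions
    (n : ℝ) (hn : 0 < n)
    (ψ ψ' : ℝ → ℝ)
    (hψ : ∀ t, HasDerivAt ψ (ψ' t) t)
    (hψ' : ∀ t, HasDerivAt ψ' (-2 * sin (ψ t)) t)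
    (α β M ω γ : ℝ → Fin 3 → ℝ)
    (hA : ∀ t, α t = ![cos (ψ t), -sin (ψ t), 0])
    (hB : ∀ t, β t = ![sin (ψ t), cos (ψ t), 0])
    (hM : ∀ t, M t = ![0, 0, ψ' t])
    (hω : ∀ t, ω t = M t ᵥ* (Matrix.diagonal ![n, n, 1])⁻¹)
    (hγ : ∀ t, γ t = α t ⨯₃ β t) :
    (∀ t, HasDerivAt M
        (M t ⨯₃ ω t + (![1, 0, 0] : Fin 3 → ℝ) ⨯₃ α t
          + (![0, 1, 0] : Fin 3 → ℝ) ⨯₃ β t) t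
      ∧ HasDerivAt α (α t ⨯₃ ω t) t
      ∧ HasDerivAt β (β t ⨯₃ ω t) t)
    ∧ (∀ t, n * (ω t 0 * γ t 0 + ω t 1 * γ t 1) + ω t 2 * (γ t 2 - 1) = 0)
    ∧ (∀ t, (1 / 2) * (n * (ω t 0 ^ 2 + ω t 1 ^ 2) + ω t 2 ^ 2) - α t 0 - β t 1
              = (1 / 2) * ψ' t ^ 2 - 2 * cos (ψ t))
    ∧ (∀ t₁ t₂ : ℝ, (1 / 2) * ψ' t₁ ^ 2 - 2 * cos (ψ t₁)
                      = (1 / 2) * ψ' t₂ ^ 2 - 2 * cos (ψ t₂))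
    ∧ (∀ t, -2 ≤ (1 / 2) * ψ' t ^ 2 - 2 * cos (ψ t)) := by
  have hinv : (Matrix.diagonal ![n, n, 1])⁻¹ = Matrix.diagonal ![n⁻¹, n⁻¹, 1] := by
    apply Matrix.inv_eq_right_inv
    rw [Matrix.diagonal_mul_diagonal]
    have h1 : (fun i => ![n, n, 1] i * ![n⁻¹, n⁻¹, 1] i) = fun _ => (1 : ℝ) := by
      funext i; fin_cases i <;> simp [mul_inv_cancel₀ hn.ne']
    rw [h1, ← Matrix.diagonal_one]
  have ωeq : ∀ t, ω t = ![0, 0, ψ' t] := by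
    intro t
    rw [hω, hM, hinv]
    funext i
    fin_cases i <;> simp [Matrix.vecMul_diagonal]
  have hαfun : α = fun t => ![cos (ψ t), -sin (ψ t), 0] := funext hA
  have hβfun : β = fun t => ![sin (ψ t), cos (ψ t), 0] := funext hB
  have hMfun : M = fun t => ![0, 0, ψ' t] := funext hM
  refine ⟨fun t => ⟨?_, ?_, ?_⟩, fun t => ?_, fun t => ?_, ?_, fun t => ?_⟩
  · -- M equation
    have h1 : M t ⨯₃ ω t + (![1, 0, 0] : Fin 3 → ℝ) ⨯₃ α t
        + (![0, 1, 0] : Fin 3 → ℝ) ⨯₃ β t = ![0, 0, -2 * sin (ψ t)] := by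
      rw [hM, ωeq, hA, hB, cross_apply, cross_apply, cross_apply]
      funext i; fin_cases i <;> simp <;> ring
    rw [h1, hMfun, hasDerivAt_pi]
    intro i
    fin_cases i <;> simp only [Matrix.cons_val_zero, Matrix.cons_val_one,
      Matrix.head_cons, Matrix.cons_val_two, Matrix.tail_cons, Fin.mk_zero,
      Fin.mk_one, Fin.isValue]
    · exact hasDerivAt_const t 0
    · exact hasDerivAt_const t 0
    · exact hψ' t
  · -- α equation
    have h1 : α t ⨯₃ ω t = ![-sin (ψ t) * ψ' t, -(cos (ψ t) * ψ' t), 0] := by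
      rw [hA, ωeq, cross_apply]
      funext i; fin_cases i <;> simp <;> ring
    rw [h1, hαfun, hasDerivAt_pi]
    intro i
    fin_cases i <;> simp only [Matrix.cons_val_zero, Matrix.cons_val_one,
      Matrix.head_cons, Matrix.cons_val_two, Matrix.tail_cons, Fin.mk_zero,
      Fin.mk_one, Fin.isValue]
    · exact (hψ t).cos
    · exact (hψ t).sin.neg
    · exact hasDerivAt_const t 0
  · -- β equation
    have h1 : β t ⨯₃ ω t = ![cos (ψ t) * ψ' t, -sin (ψ t) * ψ' t, 0] := by
      rw [hB, ωeq, cross_apply]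
      funext i; fin_cases i <;> simp <;> ring
    rw [h1, hβfun, hasDerivAt_pi]
    intro i
    fin_cases i <;> simp only [Matrix.cons_val_zero, Matrix.cons_val_one,
      Matrix.head_cons, Matrix.cons_val_two, Matrix.tail_cons, Fin.mk_zero,
      Fin.mk_one, Fin.isValue]
    · exact (hψ t).sin
    · exact (hψ t).cos
    · exact hasDerivAt_const t 0
  · -- L ≡ 0
    rw [ωeq, hγ, hA, hB, cross_apply]
    simp
    right
    nlinarith [sin_sq_add_cos_sq (ψ t)]
  · -- H formula
    rw [ωeq, hA, hB]
    simp
    ring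
  · -- constancy
    have hE : ∀ t : ℝ, HasDerivAt (fun t => (1 / 2) * ψ' t ^ 2 - 2 * cos (ψ t)) 0 t := by
      intro t
      have h := (((hψ' t).pow 2).const_mul (1 / 2 : ℝ)).sub ((hψ t).cos.const_mul 2)
      replace h : HasDerivAt (fun t => (1 / 2) * ψ' t ^ 2 - 2 * cos (ψ t))
          (1 / 2 * (((2 : ℕ) : ℝ) * ψ' t ^ (2 - 1) * (-2 * sin (ψ t))) - 2 * (-sin (ψ t) * ψ' t)) t := h
      convert h using 1
      push_cast
      ring
    intro t₁ t₂
    exact is_const_of_deriv_eq_zero (fun t => (hE t).differentiableAt)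
      (fun t => (hE t).deriv) t₁ t₂
  · -- bound
    nlinarith [cos_le_one (ψ t), sq_nonneg (ψ' t)]
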